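/- Let ⊗ be a continuous t-norm on [0,1], X a compact Hausdorff space, and Φ : C(X,[0,1]) → [0,1] a map satisfying (Mon), (Act), (Sup), (Top) and (Ten). If Zero(Φ) = {x₀} for some x₀ ∈ X, then Φ(ψ) = ψ(x₀) for every continuous ψ : X → [0,1]. -/

import Mathlib

open unitInterval Set

/-- A continuous t-norm on the unit interval `[0,1]`. -/
structure ContinuousTNorm where
  mul : I → I → I
  comm : ∀ x y, mul x y = mul y x
  assoc : ∀ x y z, mul (mul x y) z = mul x (mul y z)
  mono : ∀ ⦃x₁ x₂ y₁ y₂ : I⦄, x₁ ≤ x₂ → y₁ ≤ y₂ → mul x₁ y₁ ≤ mul x₂ y₂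
  continuous : Continuous fun p : I × I => mul p.1 p.2
  one_mul' : ∀ x, mul 1 x = x

/-- The `n`-fold `⊗`-power `xⁿ`. -/
def ContinuousTNorm.pow (T : ContinuousTNorm) (x : I) : ℕ → I
  | 0 => 1
  | n + 1 => T.mul x (T.pow x n)


/-- The constant map `1` in `C(X,[0,1])`. -/
def oneCM {X : Type*} [TopologicalSpace X] : C(X, I) := ⟨fun _ => 1, continuous_const⟩

/-- Pointwise tensor of continuous `[0,1]`-valued maps. -/
def tensCM {X : Type*} [TopologicalSpace X] (T : ContinuousTNorm) (ψ₁ ψ₂ : C(X, I)) :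
    C(X, I) :=
  ⟨fun x => T.mul (ψ₁ x) (ψ₂ x), T.continuous.comp (ψ₁.continuous.prodMk ψ₂.continuous)⟩

/-- Pointwise action `u ⊗ ψ`. -/
def smulCM {X : Type*} [TopologicalSpace X] (T : ContinuousTNorm) (u : I) (ψ : C(X, I)) :
    C(X, I) :=
  ⟨fun x => T.mul u (ψ x), T.continuous.comp (continuous_const.prodMk ψ.continuous)⟩

/-- Pointwise binary supremum. -/
noncomputable def supCM {X : Type*} [TopologicalSpace X] (ψ₁ ψ₂ : C(X, I)) : C(X, I) :=
  ⟨fun x => max (ψ₁ x) (ψ₂ x), ψ₁.continuous.max ψ₂.continuous⟩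

/- ### Auxiliary material -/

lemma TN.mul_one (T : ContinuousTNorm) (x : I) : T.mul x 1 = x := by
  rw [T.comm]; exact T.one_mul' x

lemma TN.zero_mul (T : ContinuousTNorm) (x : I) : T.mul 0 x = 0 := by
  have h : T.mul 0 x ≤ T.mul 0 1 := T.mono le_rfl le_one'
  rw [TN.mul_one] at h
  exact le_antisymm h nonneg'

lemma TN.mul_zero (T : ContinuousTNorm) (x : I) : T.mul x 0 = 0 := by
  rw [T.comm]; exact TN.zero_mul T x

lemma TN.pow_one_eq (T : ContinuousTNorm) : ∀ n : ℕ, T.pow 1 n = 1 := by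
  intro n; induction n with
  | zero => rfl
  | succ n ih => rw [ContinuousTNorm.pow, T.one_mul', ih]

lemma TN.pow_zero_eq (T : ContinuousTNorm) (n : ℕ) : T.pow 0 (n + 1) = 0 := by
  rw [ContinuousTNorm.pow, TN.zero_mul]

lemma TN.pow_succ_le (T : ContinuousTNorm) (t : I) (n : ℕ) :
    T.pow t (n + 1) ≤ T.pow t n := by
  have h : T.mul t (T.pow t n) ≤ T.mul 1 (T.pow t n) := T.mono le_one' le_rfl
  rwa [T.one_mul'] at h

lemma TN.pow_add (T : ContinuousTNorm) (t : I) (m n : ℕ) :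
    T.pow t (m + n) = T.mul (T.pow t m) (T.pow t n) := by
  induction m with
  | zero => simp [ContinuousTNorm.pow, T.one_mul']
  | succ m ih =>
    have h : m + 1 + n = (m + n) + 1 := by omega
    rw [h, ContinuousTNorm.pow, ih, ContinuousTNorm.pow, T.assoc]

/-- If `e` is idempotent, `T.mul s e = 0` and `0 < c ≤ e`, then `s = 0`. -/
lemma TN.eq_zero_of_mul_idem (T : ContinuousTNorm) {e s c : I}
    (hee : T.mul e e = e) (hse : T.mul s e = 0) (hc : 0 < (c : ℝ)) (hce : c ≤ e) :
    s = 0 := by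
  rcases le_total s e with h | h
  · -- find z with z ⊗ e = s via IVT
    obtain ⟨z, hz⟩ : ∃ z : I, T.mul z e = s := by
      set F : ℝ → ℝ := fun r => ((T.mul (Set.projIcc (0:ℝ) 1 zero_le_one r) e : I) : ℝ) with hF
      have hFc : Continuous F := by
        have h1 : Continuous (Set.projIcc (0:ℝ) 1 zero_le_one) := continuous_projIcc
        have h2 : Continuous fun z : I => T.mul z e :=
          T.continuous.comp (continuous_id.prodMk continuous_const)
        exact continuous_subtype_val.comp (h2.comp h1)
      have hF0 : F 0 = 0 := by
        simp only [hF, Set.projIcc_left]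
        have : (⟨(0:ℝ), by norm_num⟩ : I) = (0 : I) := rfl
        rw [this, TN.zero_mul]; rfl
      have hF1 : F 1 = (e : ℝ) := by
        simp only [hF, Set.projIcc_right]
        have : (⟨(1:ℝ), by norm_num⟩ : I) = (1 : I) := rfl
        rw [this, T.one_mul']
      have hmem : (s : ℝ) ∈ Set.Icc (F 0) (F 1) := by
        rw [hF0, hF1]; exact ⟨s.2.1, h⟩
      have := intermediate_value_Icc (zero_le_one (α := ℝ)) hFc.continuousOn hmem
      obtain ⟨r, _, hr⟩ := this
      exact ⟨Set.projIcc (0:ℝ) 1 zero_le_one r, Subtype.ext hr⟩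
    have hes : T.mul e s = s := by
      calc T.mul e s = T.mul e (T.mul z e) := by rw [hz]
        _ = T.mul e (T.mul e z) := by rw [T.comm z e]
        _ = T.mul (T.mul e e) z := (T.assoc e e z).symm
        _ = T.mul e z := by rw [hee]
        _ = T.mul z e := T.comm e z
        _ = s := hz
    calc s = T.mul e s := hes.symm
      _ = T.mul s e := T.comm e s
      _ = 0 := hse
  · exfalso
    have h1 : e ≤ T.mul s e := by
      calc e = T.mul e e := hee.symm
        _ ≤ T.mul s e := T.mono h (le_refl e)
    rw [hse] at h1
    have : (e : ℝ) ≤ 0 := h1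
    have : (c : ℝ) ≤ (e : ℝ) := hce
    linarith

/-- `n`-fold pointwise tensor power. -/
def tpowCM {X : Type*} [TopologicalSpace X] (T : ContinuousTNorm) (h : C(X, I)) : ℕ → C(X, I)
  | 0 => oneCM
  | n + 1 => tensCM T h (tpowCM T h n)

lemma tpowCM_apply {X : Type*} [TopologicalSpace X] (T : ContinuousTNorm) (h : C(X, I))
    (n : ℕ) (x : X) : (tpowCM T h n) x = T.pow (h x) n := by
  induction n with
  | zero => rfl
  | succ n ih => simp only [tpowCM, tensCM, ContinuousMap.coe_mk, ih, ContinuousTNorm.pow]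

/-- If `Φ : C(X,[0,1]) → [0,1]` satisfies `(Mon)`, `(Act)`, `(Sup)`, `(Top)` and `(Ten)`
and `Zero(Φ) = {x₀}`, then `Φ` is evaluation at `x₀`. -/
theorem phi_eq_eval_of_zero_singleton (T : ContinuousTNorm) {X : Type*} [TopologicalSpace X]
    [CompactSpace X] [T2Space X] (Φ : C(X, I) → I)
    (hMon : ∀ ψ₁ ψ₂ : C(X, I), (∀ x, ψ₁ x ≤ ψ₂ x) → Φ ψ₁ ≤ Φ ψ₂)
    (hAct : ∀ (u : I) (ψ : C(X, I)), Φ (smulCM T u ψ) = T.mul u (Φ ψ))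
    (hSup : ∀ ψ₁ ψ₂ : C(X, I), Φ (supCM ψ₁ ψ₂) = max (Φ ψ₁) (Φ ψ₂))
    (hTop : Φ oneCM = 1)
    (hTen : ∀ ψ₁ ψ₂ : C(X, I), Φ (tensCM T ψ₁ ψ₂) = T.mul (Φ ψ₁) (Φ ψ₂))
    (x₀ : X) (hZero : {x : X | ∀ ψ : C(X, I), Φ ψ = 0 → ψ x = 0} = {x₀}) :
    ∀ ψ : C(X, I), Φ ψ = ψ x₀ := by
  -- Φ of constants
  have hconst : ∀ c : I, Φ (ContinuousMap.const X c) = c := by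
    intro c
    have h1 : ContinuousMap.const X c = smulCM T c oneCM := by
      refine ContinuousMap.ext fun x => ?_
      show c = T.mul c 1
      rw [TN.mul_one]
    rw [h1, hAct, hTop, TN.mul_one]
  -- Φ of tensor powers
  have hPow : ∀ (h : C(X, I)) (n : ℕ), Φ (tpowCM T h n) = T.pow (Φ h) n := by
    intro h n
    induction n with
    | zero => exact hTop
    | succ n ih => show Φ (tensCM T h (tpowCM T h n)) = _; rw [hTen, ih]; rfl
  -- Boosting: every `y ≠ x₀` has an open neighbourhood on which some `Φ`-zero is ≡ 1.
  have boost : ∀ y : X, y ≠ x₀ →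
      ∃ (V : Set X) (g : C(X, I)), IsOpen V ∧ y ∈ V ∧ Φ g = 0 ∧ ∀ x ∈ V, g x = 1 := by
    intro y hy
    have hmem : y ∉ {x : X | ∀ ψ : C(X, I), Φ ψ = 0 → ψ x = 0} := by
      rw [hZero]; simpa using hy
    simp only [Set.mem_setOf_eq, not_forall] at hmem
    obtain ⟨θ, hθ0, hθy⟩ := hmem
    have hb : 0 < (θ y : ℝ) := by
      rcases lt_or_eq_of_le (θ y).2.1 with h | h
      · exact h
      · exact absurd (Subtype.ext h.symm) hθy
    set c : I := ⟨(θ y : ℝ) / 2, by constructor <;> [linarith; linarith [(θ y).2.2]]⟩ with hc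
    have hc0 : 0 < (c : ℝ) := by simp only [hc]; linarith
    set U : Set X := {x | (c : ℝ) < (θ x : ℝ)} with hU
    have hUopen : IsOpen U := isOpen_lt continuous_const (continuous_subtype_val.comp θ.continuous)
    have hyU : y ∈ U := by
      show (c : ℝ) < (θ y : ℝ)
      simp only [hc]; linarith
    obtain ⟨N₂, hN₂o, hyN₂, hN₂U⟩ :=
      normal_exists_closure_subset isClosed_singleton hUopen (singleton_subset_iff.mpr hyU)
    have hyN₂' : y ∈ N₂ := singleton_subset_iff.mp hyN₂
    obtain ⟨N₁, hN₁o, hyN₁, hN₁N₂⟩ :=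
      normal_exists_closure_subset isClosed_singleton hN₂o (singleton_subset_iff.mpr hyN₂')
    have hyN₁' : y ∈ N₁ := singleton_subset_iff.mp hyN₁
    -- Urysohn functions
    obtain ⟨gr, hg0, hg1, hg01⟩ := exists_continuous_zero_one_of_isClosed
      (isClosed_compl_iff.mpr hN₂o) isClosed_closure
      (Set.disjoint_left.mpr fun x hx hx' => hx (hN₁N₂ hx'))
    obtain ⟨hr, hh0, hh1, hh01⟩ := exists_continuous_zero_one_of_isClosed
      isClosed_closure (isClosed_compl_iff.mpr hUopen)
      (Set.disjoint_left.mpr fun x hx hx' => hx' (hN₂U hx))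
    set g : C(X, I) := ⟨fun x => ⟨gr x, hg01 x⟩, gr.continuous.subtype_mk _⟩ with hgdef
    set h : C(X, I) := ⟨fun x => ⟨hr x, hh01 x⟩, hr.continuous.subtype_mk _⟩ with hhdef
    set t : I := Φ h with ht
    -- c ≤ pow t n for all n
    have hcn : ∀ n : ℕ, c ≤ T.pow t n := by
      intro n
      have hle : ∀ x, (ContinuousMap.const X c) x ≤ (supCM (tpowCM T h n) θ) x := by
        intro x
        show c ≤ max ((tpowCM T h n) x) (θ x)
        by_cases hx : x ∈ U
        · exact le_max_of_le_right (le_of_lt hx)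
        · have hx1 : h x = 1 := Subtype.ext (hh1 hx)
          rw [tpowCM_apply, hx1, TN.pow_one_eq]
          exact le_max_of_le_left le_one'
      have h2 := hMon _ _ hle
      rwa [hconst, hSup, hPow, hθ0, max_eq_left nonneg'] at h2
    -- the idempotent e = inf of powers of t
    set a : ℕ → ℝ := fun n => ((T.pow t n : I) : ℝ) with ha
    have hanti : Antitone a := antitone_nat_of_succ_le fun n => TN.pow_succ_le T t n
    have hbdd : BddBelow (Set.range a) := ⟨0, fun r ⟨n, hn⟩ => hn ▸ (T.pow t n).2.1⟩
    set er : ℝ := ⨅ n, a n with her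
    have htend : Filter.Tendsto a Filter.atTop (nhds er) := tendsto_atTop_ciInf hanti hbdd
    have her0 : 0 ≤ er := le_ciInf fun n => (T.pow t n).2.1
    have her1 : er ≤ 1 := le_trans (ciInf_le hbdd 0) (T.pow t 0).2.2
    set e : I := ⟨er, her0, her1⟩ with he
    have hce : c ≤ e := by
      have h1 : (c : ℝ) ≤ er :=
        le_ciInf fun n => (Subtype.coe_le_coe.mpr (hcn n) : (c : ℝ) ≤ a n)
      exact Subtype.coe_le_coe.mp h1
    have htendI : Filter.Tendsto (fun n => T.pow t n) Filter.atTop (nhds e) :=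
      tendsto_subtype_rng.mpr htend
    -- e idempotent
    have hee : T.mul e e = e := by
      have h1 : Filter.Tendsto (fun n => T.mul (T.pow t n) (T.pow t n)) Filter.atTop
          (nhds (T.mul e e)) :=
        (T.continuous.tendsto (e, e)).comp (htendI.prodMk_nhds htendI)
      have h2 : (fun n => T.mul (T.pow t n) (T.pow t n)) = fun n => T.pow t (n + n) :=
        funext fun n => (TN.pow_add T t n n).symm
      have h3 : Filter.Tendsto (fun n => T.pow t (n + n)) Filter.atTop (nhds e) :=
        htendI.comp (Filter.tendsto_atTop_mono (fun n => Nat.le_add_left n n) Filter.tendsto_id)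
      exact tendsto_nhds_unique (h2 ▸ h1) h3
    -- Φ g ⊗ e = 0
    have hge : T.mul (Φ g) e = 0 := by
      have hgn : ∀ n : ℕ, T.mul (Φ g) (T.pow t (n + 1)) = 0 := by
        intro n
        have hzero : tensCM T g (tpowCM T h (n + 1)) = ContinuousMap.const X 0 := by
          ext x
          show ((T.mul (g x) ((tpowCM T h (n + 1)) x) : I) : ℝ) = ((0 : I) : ℝ)
          by_cases hx : x ∈ closure N₂
          · have hx0 : h x = 0 := Subtype.ext (hh0 hx)
            rw [tpowCM_apply, hx0, TN.pow_zero_eq, TN.mul_zero]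
          · have hx0 : g x = 0 := Subtype.ext (hg0 (fun hx' => hx (subset_closure hx')))
            rw [hx0, TN.zero_mul]
        have := congrArg Φ hzero
        rwa [hTen, hPow, hconst] at this
      have h1 : Filter.Tendsto (fun n => T.mul (Φ g) (T.pow t (n + 1))) Filter.atTop
          (nhds (T.mul (Φ g) e)) := by
        have hmulc : Continuous fun u : I => T.mul (Φ g) u :=
          T.continuous.comp (continuous_const.prodMk continuous_id)
        exact (hmulc.tendsto e).comp (htendI.comp (Filter.tendsto_add_atTop_nat 1))
      have h2 : Filter.Tendsto (fun _ : ℕ => (0 : I)) Filter.atTop (nhds (T.mul (Φ g) e)) := by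
        simpa only [hgn] using h1
      exact tendsto_nhds_unique h2 tendsto_const_nhds
    have hΦg : Φ g = 0 := TN.eq_zero_of_mul_idem T hee hge hc0 hce
    refine ⟨N₁, g, hN₁o, hyN₁', hΦg, fun x hx => Subtype.ext (hg1 (subset_closure hx))⟩
  -- Key: for any closed K not containing x₀ there is a Φ-zero which is ≡ 1 on K.
  have key : ∀ K : Set X, IsClosed K → x₀ ∉ K →
      ∃ θ : C(X, I), Φ θ = 0 ∧ ∀ x ∈ K, θ x = 1 := by
    intro K hKc hKx
    choose! V g hVo hyV hΦg hgOne using boost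
    obtain ⟨tset, htK, htcov⟩ := hKc.isCompact.elim_nhds_subcover V
      (fun x hx => (hVo x (fun h => hKx (h ▸ hx))).mem_nhds (hyV x (fun h => hKx (h ▸ hx))))
    have main : ∀ tf : Finset X, (∀ z ∈ tf, z ∈ K) →
        ∃ θ : C(X, I), Φ θ = 0 ∧ ∀ x, x ∈ (⋃ z ∈ tf, V z) → θ x = 1 := by
      intro tf
      classical
      induction tf using Finset.induction_on with
      | empty => intro _; exact ⟨ContinuousMap.const X 0, hconst 0, by simp⟩
      | @insert b s hbs ih =>
        intro hmem
        obtain ⟨θs, hθs0, hθs1⟩ := ih fun z hz => hmem z (Finset.mem_insert_of_mem hz)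
        have hbK : b ∈ K := hmem b (Finset.mem_insert_self b s)
        have hbx : b ≠ x₀ := fun h => hKx (h ▸ hbK)
        refine ⟨supCM (g b) θs, by rw [hSup, hΦg b hbx, hθs0]; simp, ?_⟩
        intro x hx
        simp only [Set.mem_iUnion, exists_prop] at hx
        obtain ⟨z, hz, hxV⟩ := hx
        show max ((g b) x) (θs x) = 1
        rcases Finset.mem_insert.mp hz with h | h
        · rw [hgOne b hbx x (h ▸ hxV)]
          exact max_eq_left le_one'
        · rw [hθs1 x (Set.mem_iUnion.mpr ⟨z, Set.mem_iUnion.mpr ⟨h, hxV⟩⟩)]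
          exact max_eq_right le_one'
    obtain ⟨θ, h0, h1⟩ := main tset htK
    exact ⟨θ, h0, fun x hx => h1 x (htcov hx)⟩
  -- Final argument
  intro ψ
  apply le_antisymm
  · -- Φ ψ ≤ ψ x₀
    by_contra hlt
    push_neg at hlt
    obtain ⟨v, hv1, hv2⟩ := exists_between ((Subtype.coe_lt_coe.mpr hlt) : ((ψ x₀ : ℝ) < Φ ψ))
    set vI : I := ⟨v, le_trans (ψ x₀).2.1 hv1.le, hv2.le.trans (Φ ψ).2.2⟩ with hvI
    set K : Set X := {x | v ≤ ((ψ x : I) : ℝ)} with hK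
    have hKc : IsClosed K := isClosed_le continuous_const (continuous_subtype_val.comp ψ.continuous)
    have hKx : x₀ ∉ K := by
      show ¬ (v ≤ (ψ x₀ : ℝ)); linarith
    obtain ⟨θ, hθ0, hθ1⟩ := key K hKc hKx
    have hle : ∀ x, ψ x ≤ (supCM (ContinuousMap.const X vI) θ) x := by
      intro x
      show ψ x ≤ max vI (θ x)
      by_cases hx : x ∈ K
      · rw [hθ1 x hx]; exact le_max_of_le_right le_one'
      · have : (ψ x : ℝ) ≤ v := le_of_not_ge hx
        exact le_max_of_le_left this
    have h2 := hMon _ _ hle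
    rw [hSup, hconst, hθ0, max_eq_left nonneg'] at h2
    have : (Φ ψ : ℝ) ≤ v := h2
    linarith
  · -- ψ x₀ ≤ Φ ψ
    by_contra hlt
    push_neg at hlt
    obtain ⟨w, hw1, hw2⟩ := exists_between ((Subtype.coe_lt_coe.mpr hlt) : ((Φ ψ : ℝ) < ψ x₀))
    set wI : I := ⟨w, le_trans (Φ ψ).2.1 hw1.le, hw2.le.trans (ψ x₀).2.2⟩ with hwI
    set K : Set X := {x | ((ψ x : I) : ℝ) ≤ w} with hK
    have hKc : IsClosed K := isClosed_le (continuous_subtype_val.comp ψ.continuous) continuous_const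
    have hKx : x₀ ∉ K := by
      show ¬ ((ψ x₀ : ℝ) ≤ w); linarith
    obtain ⟨θ, hθ0, hθ1⟩ := key K hKc hKx
    have hle : ∀ x, (ContinuousMap.const X wI) x ≤ (supCM ψ θ) x := by
      intro x
      show wI ≤ max (ψ x) (θ x)
      by_cases hx : x ∈ K
      · rw [hθ1 x hx]; exact le_max_of_le_right le_one'
      · have : w ≤ (ψ x : ℝ) := le_of_not_ge hx
        exact le_max_of_le_left this
    have h2 := hMon _ _ hle
    rw [hSup, hconst, hθ0, max_eq_left nonneg'] at h2
    have : w ≤ (Φ ψ : ℝ) := h2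
    linarith
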